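/- Let d ≥ 3. For every nonzero x ∈ ℝ^d and t ≥ 0, ∫₀^t ∫_{ℝ^d} p_s(y) |y - x|^{-2} dy ds ≤ (2/(d-2)) (log⁺(1/|x|) + 1 + √d √t), where log⁺ u = max(log u, 0). -/

import Mathlib

open MeasureTheory Real Filter Topology
open Set RealInnerProductSpace

noncomputable def heatKernel (d : ℕ) (t : ℝ) (y : EuclideanSpace ℝ (Fin d)) : ℝ :=
  (2 * Real.pi * t) ^ (-(d : ℝ) / 2) * Real.exp (-‖y‖ ^ 2 / (2 * t))


section
variable (d : ℕ) (hd : 3 ≤ d) (x : EuclideanSpace ℝ (Fin d)) {s r : ℝ}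

lemma gauss_int (b : ℝ) (hb : 0 < b) :
    ∫ v : EuclideanSpace ℝ (Fin d), rexp (-b * ‖v‖^2) = (π / b) ^ ((d:ℝ) / 2) := by
  rw [GaussianFourier.integral_rexp_neg_mul_sq_norm hb]
  norm_num [finrank_euclideanSpace_fin]

lemma gauss_integrable (b : ℝ) (hb : 0 < b) :
    Integrable (fun v : EuclideanSpace ℝ (Fin d) => rexp (-b * ‖v‖^2)) := by
  have := (GaussianFourier.integrable_cexp_neg_mul_sq_norm_add (V := EuclideanSpace ℝ (Fin d))
    (b := (b:ℂ)) (by simpa using hb) 0 0).norm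
  refine this.congr (Eventually.of_forall fun v => ?_)
  simp [Complex.norm_exp, ← Complex.ofReal_pow]

-- pointwise completing the square
lemma complete_sq (hs : 0 < s) (hr : 0 ≤ r) (y : EuclideanSpace ℝ (Fin d)) :
    heatKernel d s y * rexp (-r * ‖y - x‖^2) =
      (2 * π * s) ^ (-(d:ℝ)/2) * (rexp (-(r * ‖x‖^2 / (1 + 2*r*s))) *
        rexp (-(1/(2*s) + r) * ‖y - (r/(1/(2*s)+r)) • x‖^2)) := by
  have hα : 0 < 1/(2*s) + r := by positivity
  have h1 : ‖y - x‖^2 = ‖y‖^2 - 2*⟪y,x⟫ + ‖x‖^2 := norm_sub_sq_real y x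
  have h2 : ‖y - (r/(1/(2*s)+r)) • x‖^2
      = ‖y‖^2 - 2*((r/(1/(2*s)+r)) * ⟪y,x⟫) + (r/(1/(2*s)+r))^2 * ‖x‖^2 := by
    rw [norm_sub_sq_real, real_inner_smul_right, norm_smul]
    simp [mul_pow, div_pow, sq_abs]
  rw [heatKernel, mul_assoc, ← Real.exp_add, ← Real.exp_add]
  congr 2
  rw [h1, h2]
  have h1s : (1 + 2*r*s) ≠ 0 := by positivity
  field_simp
  ring
end

section
variable (d : ℕ) (x : EuclideanSpace ℝ (Fin d)) {s r : ℝ}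

lemma kernel_exp_integrable (hs : 0 < s) (hr : 0 ≤ r) :
    Integrable (fun y : EuclideanSpace ℝ (Fin d) =>
      heatKernel d s y * rexp (-r * ‖y - x‖^2)) := by
  have hα : 0 < 1/(2*s) + r := by positivity
  simp_rw [complete_sq d x hs hr]
  exact (((gauss_integrable d _ hα).comp_sub_right
    ((r/(1/(2*s)+r)) • x)).const_mul _).const_mul _

lemma kernel_exp_integral (hs : 0 < s) (hr : 0 ≤ r) :
    (∫ y : EuclideanSpace ℝ (Fin d), heatKernel d s y * rexp (-r * ‖y - x‖^2)) =
      (1 + 2*r*s) ^ (-(d:ℝ)/2) * rexp (-(r * ‖x‖^2 / (1 + 2*r*s))) := by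
  have hα : 0 < 1/(2*s) + r := by positivity
  have h2πs : (0:ℝ) < 2*π*s := by positivity
  have h12 : (0:ℝ) < 1+2*r*s := by positivity
  simp_rw [complete_sq d x hs hr]
  rw [integral_const_mul, integral_const_mul,
    show (∫ y : EuclideanSpace ℝ (Fin d), rexp (-(1/(2*s) + r) * ‖y - (r/(1/(2*s)+r)) • x‖^2))
      = ∫ y : EuclideanSpace ℝ (Fin d), rexp (-(1/(2*s) + r) * ‖y‖^2) from
      integral_sub_right_eq_self (μ := volume)
        (fun v => rexp (-(1/(2*s)+r) * ‖v‖^2)) ((r/(1/(2*s)+r)) • x), gauss_int d _ hα]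
  have hbase : π/(1/(2*s)+r) = (2*π*s) * (1+2*r*s)⁻¹ := by field_simp
  rw [hbase, Real.mul_rpow h2πs.le (by positivity), Real.inv_rpow h12.le]
  have : (2*π*s) ^ (-(d:ℝ)/2) * (2*π*s) ^ ((d:ℝ)/2) = 1 := by
    rw [← Real.rpow_add h2πs, neg_div, neg_add_cancel, Real.rpow_zero]
  have h2 : ((1+2*r*s) ^ ((d:ℝ)/2))⁻¹ = (1+2*r*s) ^ (-(d:ℝ)/2) := by
    rw [← Real.rpow_neg h12.le, neg_div]
  calc (2*π*s) ^ (-(d:ℝ)/2) * (rexp (-(r * ‖x‖^2 / (1 + 2*r*s))) *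
        ((2*π*s) ^ ((d:ℝ)/2) * ((1+2*r*s) ^ ((d:ℝ)/2))⁻¹))
      = ((2*π*s) ^ (-(d:ℝ)/2) * (2*π*s) ^ ((d:ℝ)/2)) * (((1+2*r*s) ^ ((d:ℝ)/2))⁻¹ *
        rexp (-(r * ‖x‖^2 / (1 + 2*r*s)))) := by ring
    _ = (1 + 2*r*s) ^ (-(d:ℝ)/2) * rexp (-(r * ‖x‖^2 / (1 + 2*r*s))) := by
        rw [this, h2, one_mul]
end

lemma exp_tend (c : ℝ) (hc : 0 < c) :
    Tendsto (fun u : ℝ => -c⁻¹ * rexp (-(c*u))) atTop (𝓝 0) := by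
  have h1 : Tendsto (fun u : ℝ => -(c*u)) atTop atBot := by
    apply tendsto_neg_atBot_iff.mpr
    exact Tendsto.const_mul_atTop hc tendsto_id
  have := (Real.tendsto_exp_atBot.comp h1).const_mul (-c⁻¹)
  simpa using this

lemma exp_Ioi_integral {c : ℝ} (hc : 0 < c) :
    IntegrableOn (fun r : ℝ => rexp (-(c*r))) (Ioi 0) ∧
    ∫ r in Ioi (0:ℝ), rexp (-(c*r)) = c⁻¹ := by
  have hderiv : ∀ r ∈ Ici (0:ℝ), HasDerivAt (fun u : ℝ => -c⁻¹ * rexp (-(c*u)))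
      (rexp (-(c*r))) r := by
    intro r _
    have h1 : HasDerivAt (fun u : ℝ => -(c*u)) (-c) r := by
      simpa [Pi.neg_def] using ((hasDerivAt_id r).const_mul c).neg
    have := (h1.exp).const_mul (-c⁻¹)
    refine this.congr_deriv ?_
    field_simp
  have hpos : ∀ r ∈ Ioi (0:ℝ), 0 ≤ rexp (-(c*r)) := fun r _ => (Real.exp_pos _).le
  constructor
  · exact integrableOn_Ioi_deriv_of_nonneg' hderiv hpos (exp_tend c hc)
  · rw [integral_Ioi_of_hasDerivAt_of_nonneg' hderiv hpos (exp_tend c hc)]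
    simp

lemma pow_tail_integral (d : ℕ) (hd : 3 ≤ d) {s : ℝ} (hs : 0 < s) {R : ℝ} (hR : 0 ≤ R) :
    IntegrableOn (fun r : ℝ => (1+2*r*s) ^ (-(d:ℝ)/2)) (Ioi R) ∧
    ∫ r in Ioi R, (1+2*r*s) ^ (-(d:ℝ)/2)
      = (1+2*R*s) ^ (1-(d:ℝ)/2) / (s*((d:ℝ)-2)) := by
  have hd2 : (0:ℝ) < (d:ℝ) - 2 := by
    have : (3:ℝ) ≤ d := by exact_mod_cast hd
    linarith
  set g : ℝ → ℝ := fun u => -(s*((d:ℝ)-2))⁻¹ * (1+2*u*s) ^ (1-(d:ℝ)/2) with hg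
  have hderiv : ∀ r ∈ Ici R, HasDerivAt g ((1+2*r*s) ^ (-(d:ℝ)/2)) r := by
    intro r hr
    have hb : (0:ℝ) < 1+2*r*s := by
      have : (0:ℝ) ≤ r := le_trans hR hr
      positivity
    have h1 : HasDerivAt (fun u : ℝ => 1+2*u*s) (2*s) r := by
      have h0 : HasDerivAt (fun u:ℝ => 1 + 2*s*u) (2*s) r := by
        simpa using ((hasDerivAt_id r).const_mul (2*s)).const_add 1
      exact h0.congr_of_eventuallyEq (Eventually.of_forall fun u => by ring)
    have h2 := (h1.rpow_const (p := 1-(d:ℝ)/2) (Or.inl hb.ne')).const_mul (-(s*((d:ℝ)-2))⁻¹)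
    refine h2.congr_deriv ?_
    have : (1-(d:ℝ)/2) - 1 = -(d:ℝ)/2 := by ring
    rw [this]
    field_simp
    ring
  have htend : Tendsto g atTop (𝓝 0) := by
    have h1 : Tendsto (fun u : ℝ => 1+2*u*s) atTop atTop := by
      apply tendsto_atTop_add_const_left
      exact Tendsto.atTop_mul_const hs (tendsto_id.const_mul_atTop two_pos)
    have h2 : Tendsto (fun y : ℝ => y ^ (-((d:ℝ)/2 - 1))) atTop (𝓝 0) :=
      tendsto_rpow_neg_atTop (by linarith)
    have h3 := (h2.comp h1).const_mul (-(s*((d:ℝ)-2))⁻¹)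
    simp only [mul_zero] at h3
    convert h3 using 2 with u
    simp only [Function.comp_apply, hg]
    congr 1
    ring
  have hpos : ∀ r ∈ Ioi R, 0 ≤ (1+2*r*s) ^ (-(d:ℝ)/2) := by
    intro r hr
    have : (0:ℝ) ≤ r := le_trans hR (le_of_lt hr)
    positivity
  constructor
  · exact integrableOn_Ioi_deriv_of_nonneg' hderiv hpos htend
  · rw [integral_Ioi_of_hasDerivAt_of_nonneg' hderiv hpos htend, hg]
    have hb : (0:ℝ) < 1+2*R*s := by positivity
    simp only [zero_sub, neg_mul, neg_neg]
    rw [div_eq_inv_mul]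
    ring

section inner
variable {d : ℕ} (hd : 3 ≤ d) (x : EuclideanSpace ℝ (Fin d)) (hx : x ≠ 0) {s : ℝ}

lemma hk_nonneg (hs : 0 < s) (y : EuclideanSpace ℝ (Fin d)) : 0 ≤ heatKernel d s y :=
  mul_nonneg (Real.rpow_nonneg (by positivity) _) (Real.exp_pos _).le

lemma hk_continuous (hs : 0 < s) : Continuous (heatKernel d s) := by
  unfold heatKernel
  exact continuous_const.mul ((((continuous_norm.pow 2).neg).div_const _).rexp)

lemma lint_eq (hd : 3 ≤ d) (hs : 0 < s) :
    ∫⁻ y, ENNReal.ofReal (heatKernel d s y * ‖y - x‖ ^ (-2:ℝ)) =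
    ∫⁻ r in Ioi (0:ℝ),
      ENNReal.ofReal ((1+2*r*s) ^ (-(d:ℝ)/2) * rexp (-(r * ‖x‖^2 / (1+2*r*s)))) := by
  haveI : Nonempty (Fin d) := ⟨⟨0, by omega⟩⟩
  have hae : ∀ᵐ y : EuclideanSpace ℝ (Fin d) ∂volume, y ≠ x := by
    rw [ae_iff]
    simpa only [ne_eq, not_not, setOf_eq_eq_singleton] using measure_singleton x
  have step1 : ∫⁻ y, ENNReal.ofReal (heatKernel d s y * ‖y - x‖ ^ (-2:ℝ))
      = ∫⁻ y, ∫⁻ r in Ioi (0:ℝ),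
          ENNReal.ofReal (heatKernel d s y) * ENNReal.ofReal (rexp (-(‖y-x‖^2 * r))) := by
    refine lintegral_congr_ae (hae.mono fun y hy => ?_)
    dsimp only
    have hc : 0 < ‖y - x‖^2 := by
      have h0 : 0 < ‖y - x‖ := norm_pos_iff.mpr (sub_ne_zero.mpr hy)
      positivity
    have hrw : ‖y - x‖ ^ (-2:ℝ) = (‖y-x‖^2)⁻¹ := by
      rw [show (-2:ℝ) = -(2:ℝ) by norm_num, Real.rpow_neg (norm_nonneg _)]
      rw [show (2:ℝ) = ((2:ℕ):ℝ) by norm_num, Real.rpow_natCast]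
    rw [hrw, ENNReal.ofReal_mul (hk_nonneg hs y),
      ← (exp_Ioi_integral hc).2,
      ofReal_integral_eq_lintegral_ofReal (exp_Ioi_integral hc).1
        (Eventually.of_forall fun r => (Real.exp_pos _).le),
      lintegral_const_mul' _ _ ENNReal.ofReal_ne_top]
  rw [step1]
  have hmeas : AEMeasurable
      (Function.uncurry fun (y : EuclideanSpace ℝ (Fin d)) (r : ℝ) =>
        ENNReal.ofReal (heatKernel d s y) * ENNReal.ofReal (rexp (-(‖y-x‖^2 * r))))
      (volume.prod (volume.restrict (Ioi (0:ℝ)))) := by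
    apply Measurable.aemeasurable
    apply Measurable.mul (f := fun p : EuclideanSpace ℝ (Fin d) × ℝ => ENNReal.ofReal (heatKernel d s p.1))
      (g := fun p : EuclideanSpace ℝ (Fin d) × ℝ => ENNReal.ofReal (rexp (-(‖p.1 - x‖^2 * p.2))))
    · exact ((hk_continuous hs).measurable.comp measurable_fst).ennreal_ofReal
    · have hcont : Continuous fun p : EuclideanSpace ℝ (Fin d) × ℝ =>
        rexp (-(‖p.1 - x‖^2 * p.2)) := by
        apply Real.continuous_exp.comp
        exact (((continuous_fst.sub continuous_const).norm.pow 2).mul continuous_snd).neg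
      exact hcont.measurable.ennreal_ofReal
  rw [lintegral_lintegral_swap hmeas]
  refine lintegral_congr_ae ((ae_restrict_iff' measurableSet_Ioi).2
    (Eventually.of_forall fun r hr => ?_))
  have hr0 : 0 ≤ r := le_of_lt hr
  calc ∫⁻ y, ENNReal.ofReal (heatKernel d s y) * ENNReal.ofReal (rexp (-(‖y-x‖^2 * r)))
      = ∫⁻ y, ENNReal.ofReal (heatKernel d s y * rexp (-r * ‖y-x‖^2)) := by
        refine lintegral_congr fun y => ?_
        rw [← ENNReal.ofReal_mul (hk_nonneg hs y)]
        ring_nf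
    _ = ENNReal.ofReal (∫ y, heatKernel d s y * rexp (-r * ‖y-x‖^2)) :=
        (ofReal_integral_eq_lintegral_ofReal (kernel_exp_integrable d x hs hr0)
          (Eventually.of_forall fun y =>
            mul_nonneg (hk_nonneg hs y) (Real.exp_pos _).le)).symm
    _ = ENNReal.ofReal ((1+2*r*s) ^ (-(d:ℝ)/2) * rexp (-(r * ‖x‖^2 / (1+2*r*s)))) := by
        rw [kernel_exp_integral d x hs hr0]
end inner

section bounds
variable {d : ℕ} {s : ℝ}

lemma rlint_bound2 (hd : 3 ≤ d) (a : ℝ) (hs : 0 < s) :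
    (∫⁻ r in Ioi (0:ℝ),
      ENNReal.ofReal ((1+2*r*s) ^ (-(d:ℝ)/2) * rexp (-(r * a^2 / (1+2*r*s)))))
      ≤ ENNReal.ofReal (1/(((d:ℝ)-2)*s)) := by
  have h1 : (∫⁻ r in Ioi (0:ℝ),
      ENNReal.ofReal ((1+2*r*s) ^ (-(d:ℝ)/2) * rexp (-(r * a^2 / (1+2*r*s)))))
      ≤ ∫⁻ r in Ioi (0:ℝ), ENNReal.ofReal ((1+2*r*s) ^ (-(d:ℝ)/2)) := by
    refine lintegral_mono_ae ((ae_restrict_iff' measurableSet_Ioi).2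
      (Eventually.of_forall fun r hr => ?_))
    refine ENNReal.ofReal_le_ofReal ?_
    have h0r : (0:ℝ) < r := hr
    have h2 : rexp (-(r * a^2 / (1+2*r*s))) ≤ 1 := by
      rw [Real.exp_le_one_iff]
      have hb : (0:ℝ) < 1+2*r*s := by positivity
      have : 0 ≤ r * a^2 / (1+2*r*s) := by positivity
      linarith
    calc (1+2*r*s) ^ (-(d:ℝ)/2) * rexp (-(r * a^2 / (1+2*r*s)))
        ≤ (1+2*r*s) ^ (-(d:ℝ)/2) * 1 := by
          refine mul_le_mul_of_nonneg_left h2 ?_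
          have := le_of_lt (mem_Ioi.mp hr); positivity
      _ = (1+2*r*s) ^ (-(d:ℝ)/2) := mul_one _
  refine h1.trans (le_of_eq ?_)
  rw [← (ofReal_integral_eq_lintegral_ofReal (pow_tail_integral d hd hs le_rfl).1
      ((ae_restrict_iff' measurableSet_Ioi).2 (Eventually.of_forall fun r hr => by
        have h0 := le_of_lt (mem_Ioi.mp hr)
        exact Real.rpow_nonneg (by positivity) _)))]
  rw [(pow_tail_integral d hd hs le_rfl).2]
  norm_num [mul_comm]

lemma rlint_bound1 (hd : 3 ≤ d) {a : ℝ} (ha : 0 < a) (hs : 0 < s) :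
    (∫⁻ r in Ioi (0:ℝ),
      ENNReal.ofReal ((1+2*r*s) ^ (-(d:ℝ)/2) * rexp (-(r * a^2 / (1+2*r*s)))))
      ≤ ENNReal.ofReal (2*(d:ℝ)/(((d:ℝ)-2)*a^2)) := by
  have hd2 : (0:ℝ) < (d:ℝ) - 2 := by
    have : (3:ℝ) ≤ d := by exact_mod_cast hd
    linarith
  set R : ℝ := 1/(2*s) with hR
  have hRpos : 0 < R := by positivity
  have hsplit : Ioi (0:ℝ) = Ioc 0 R ∪ Ioi R := (Ioc_union_Ioi_eq_Ioi hRpos.le).symm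
  rw [hsplit, lintegral_union measurableSet_Ioi Ioc_disjoint_Ioi_same]
  -- part 1
  have hpart1 : (∫⁻ r in Ioc (0:ℝ) R,
      ENNReal.ofReal ((1+2*r*s) ^ (-(d:ℝ)/2) * rexp (-(r * a^2 / (1+2*r*s)))))
      ≤ ENNReal.ofReal (2/a^2) := by
    have hmono : (∫⁻ r in Ioc (0:ℝ) R,
        ENNReal.ofReal ((1+2*r*s) ^ (-(d:ℝ)/2) * rexp (-(r * a^2 / (1+2*r*s)))))
        ≤ ∫⁻ r in Ioc (0:ℝ) R, ENNReal.ofReal (rexp (-(a^2/2 * r))) := by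
      refine lintegral_mono_ae ((ae_restrict_iff' measurableSet_Ioc).2
        (Eventually.of_forall fun r hr => ?_))
      obtain ⟨hr0, hrR⟩ := hr
      have hb : (0:ℝ) < 1+2*r*s := by have := hr0.le; positivity
      refine ENNReal.ofReal_le_ofReal ?_
      have hp : (1+2*r*s) ^ (-(d:ℝ)/2) ≤ 1 := by
        apply Real.rpow_le_one_of_one_le_of_nonpos (by nlinarith [hr0.le])
        have h0d : (0:ℝ) ≤ (d:ℝ) := Nat.cast_nonneg d
        linarith
      have hexp : rexp (-(r * a^2 / (1+2*r*s))) ≤ rexp (-(a^2/2 * r)) := by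
        apply Real.exp_le_exp.2
        rw [neg_le_neg_iff]
        have h2 : 1+2*r*s ≤ 2 := by
          have : 2*r*s ≤ 1 := by
            rw [hR] at hrR
            calc 2*r*s ≤ 2*(1/(2*s))*s := by nlinarith
              _ = 1 := by field_simp
          linarith
        rw [le_div_iff₀ hb]
        nlinarith [mul_nonneg (mul_nonneg (sq_nonneg a) hr0.le)
          (by linarith : (0:ℝ) ≤ 2 - (1+2*r*s))]
      calc (1+2*r*s) ^ (-(d:ℝ)/2) * rexp (-(r * a^2 / (1+2*r*s)))
          ≤ 1 * rexp (-(a^2/2 * r)) := by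
            apply mul_le_mul hp hexp (Real.exp_pos _).le zero_le_one
        _ = rexp (-(a^2/2 * r)) := one_mul _
    refine hmono.trans ?_
    have hsub : (∫⁻ r in Ioc (0:ℝ) R, ENNReal.ofReal (rexp (-(a^2/2 * r))))
        ≤ ∫⁻ r in Ioi (0:ℝ), ENNReal.ofReal (rexp (-(a^2/2 * r))) :=
      lintegral_mono_set Ioc_subset_Ioi_self
    refine hsub.trans (le_of_eq ?_)
    have hc : (0:ℝ) < a^2/2 := by positivity
    rw [← ofReal_integral_eq_lintegral_ofReal (exp_Ioi_integral hc).1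
      (Eventually.of_forall fun r => (Real.exp_pos _).le), (exp_Ioi_integral hc).2]
    congr 1
    field_simp
  -- part 2
  have hpart2 : (∫⁻ r in Ioi R,
      ENNReal.ofReal ((1+2*r*s) ^ (-(d:ℝ)/2) * rexp (-(r * a^2 / (1+2*r*s)))))
      ≤ ENNReal.ofReal (2/(((d:ℝ)-2)*a^2)) := by
    have hmono : (∫⁻ r in Ioi R,
        ENNReal.ofReal ((1+2*r*s) ^ (-(d:ℝ)/2) * rexp (-(r * a^2 / (1+2*r*s)))))
        ≤ ∫⁻ r in Ioi R, ENNReal.ofReal (rexp (-(a^2/(4*s))) * (1+2*r*s) ^ (-(d:ℝ)/2)) := by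
      refine lintegral_mono_ae ((ae_restrict_iff' measurableSet_Ioi).2
        (Eventually.of_forall fun r hr => ?_))
      have hrR : R < r := hr
      have hr0 : 0 < r := lt_trans hRpos hrR
      have hb : (0:ℝ) < 1+2*r*s := by have := hr0.le; positivity
      refine ENNReal.ofReal_le_ofReal ?_
      have hexp : rexp (-(r * a^2 / (1+2*r*s))) ≤ rexp (-(a^2/(4*s))) := by
        apply Real.exp_le_exp.2
        rw [neg_le_neg_iff, div_le_div_iff₀ (by positivity) hb]
        have h1 : 1 ≤ 2*r*s := by
          rw [hR] at hrR
          rw [div_lt_iff₀ (by positivity)] at hrR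
          nlinarith
        nlinarith [sq_nonneg a]
      calc (1+2*r*s) ^ (-(d:ℝ)/2) * rexp (-(r * a^2 / (1+2*r*s)))
          ≤ (1+2*r*s) ^ (-(d:ℝ)/2) * rexp (-(a^2/(4*s))) := by
            refine mul_le_mul_of_nonneg_left hexp (by positivity)
        _ = rexp (-(a^2/(4*s))) * (1+2*r*s) ^ (-(d:ℝ)/2) := mul_comm _ _
    refine hmono.trans ?_
    have heq : (∫⁻ r in Ioi R, ENNReal.ofReal (rexp (-(a^2/(4*s))) * (1+2*r*s) ^ (-(d:ℝ)/2)))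
        = ENNReal.ofReal (rexp (-(a^2/(4*s))) * ((1+2*R*s) ^ (1-(d:ℝ)/2) / (s*((d:ℝ)-2)))) := by
      have hint := (pow_tail_integral d hd hs hRpos.le)
      rw [← ofReal_integral_eq_lintegral_ofReal (hint.1.const_mul _)
        ((ae_restrict_iff' measurableSet_Ioi).2 (Eventually.of_forall fun r hr => by
          have h0 : (0:ℝ) ≤ r := (lt_trans hRpos hr).le
          positivity))]
      rw [integral_const_mul, hint.2]
    rw [heq]
    refine ENNReal.ofReal_le_ofReal ?_
    -- real inequality: exp(-u/4) * 2^{1-d/2} * u ≤ 2 with u = a^2/s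
    have h2Rs : 1+2*R*s = 2 := by rw [hR]; field_simp; norm_num
    rw [h2Rs]
    set u : ℝ := a^2/s with hu
    have hupos : 0 < u := by positivity
    have hkey : u * rexp (-(u/4)) ≤ 2 := by
      have h1 : u/4 ≤ rexp (u/4 - 1) := by
        have := Real.add_one_le_exp (u/4 - 1); linarith
      have h2 : u/4 * rexp (1 - u/4) ≤ rexp (u/4 - 1) * rexp (1 - u/4) :=
        mul_le_mul_of_nonneg_right h1 (Real.exp_pos _).le
      have h3 : rexp (u/4 - 1) * rexp (1 - u/4) = 1 := by
        rw [← Real.exp_add]; norm_num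
      have h4 : rexp (1 - u/4) = rexp 1 * rexp (-(u/4)) := by
        rw [← Real.exp_add]; ring_nf
      have h5 : u/4 * (rexp 1 * rexp (-(u/4))) ≤ 1 := by
        rw [← h4]; exact h2.trans_eq h3
      have he : (2:ℝ) ≤ rexp 1 := by
        have := Real.add_one_le_exp (1:ℝ); linarith
      nlinarith [Real.exp_pos (-(u/4)), mul_nonneg hupos.le (Real.exp_pos (-(u/4))).le]
    have harg : a^2/(4*s) = u/4 := by rw [hu]; ring
    have hEa : rexp (-(a^2/(4*s))) * a^2 ≤ 2*s := by
      have h6 := mul_le_mul_of_nonneg_right hkey hs.le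
      have h7 : u * rexp (-(u/4)) * s = rexp (-(u/4)) * a^2 := by
        rw [hu]; field_simp
      rw [harg]
      linarith [h7 ▸ h6]
    have hpow : (2:ℝ) ^ (1-(d:ℝ)/2) ≤ 1 := by
      apply Real.rpow_le_one_of_one_le_of_nonpos one_le_two
      have h3d : (3:ℝ) ≤ (d:ℝ) := by exact_mod_cast hd
      linarith
    have ha2 : (0:ℝ) < a^2 := by positivity
    calc rexp (-(a^2/(4*s))) * ((2:ℝ) ^ (1-(d:ℝ)/2) / (s*((d:ℝ)-2)))
        ≤ rexp (-(a^2/(4*s))) * (1 / (s*((d:ℝ)-2))) := by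
          apply mul_le_mul_of_nonneg_left _ (Real.exp_pos _).le
          exact (div_le_div_iff_of_pos_right (mul_pos hs hd2)).mpr hpow
      _ ≤ 2/(((d:ℝ)-2)*a^2) := by
          rw [mul_one_div, div_le_div_iff₀ (by positivity) (by positivity)]
          nlinarith [hEa, hd2, (Real.exp_pos (-(a^2/(4*s)))).le]
  refine (add_le_add hpart1 hpart2).trans ?_
  rw [← ENNReal.ofReal_add (by positivity) (by positivity)]
  refine ENNReal.ofReal_le_ofReal ?_
  have ha2 : (0:ℝ) < a^2 := by positivity
  have e1 : 2/a^2 = (2*((d:ℝ)-2))/(((d:ℝ)-2)*a^2) := by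
    rw [eq_div_iff (mul_pos hd2 ha2).ne']
    field_simp
  rw [e1, ← add_div, div_le_div_iff₀ (mul_pos hd2 ha2) (mul_pos hd2 ha2)]
  nlinarith [hd2, ha2]
end bounds

section innerle
variable {d : ℕ} {s : ℝ}

lemma inner_le (hd : 3 ≤ d) (x : EuclideanSpace ℝ (Fin d)) (hx : x ≠ 0) (hs : 0 < s) :
    (∫ y, heatKernel d s y * ‖y - x‖ ^ (-2:ℝ)) ≤
      min (2*(d:ℝ)/(((d:ℝ)-2)*‖x‖^2)) (1/(((d:ℝ)-2)*s)) := by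
  have hd2 : (0:ℝ) < (d:ℝ) - 2 := by
    have : (3:ℝ) ≤ d := by exact_mod_cast hd
    linarith
  have ha : 0 < ‖x‖ := norm_pos_iff.mpr hx
  have hnn : ∀ y : EuclideanSpace ℝ (Fin d), 0 ≤ heatKernel d s y * ‖y - x‖ ^ (-2:ℝ) :=
    fun y => mul_nonneg (hk_nonneg hs y) (Real.rpow_nonneg (norm_nonneg _) _)
  have hrw : (fun y : EuclideanSpace ℝ (Fin d) => heatKernel d s y * ‖y - x‖ ^ (-2:ℝ))
      = (fun y => heatKernel d s y * (‖y - x‖^2)⁻¹) := funext fun y => by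
    rcases eq_or_ne (y - x) 0 with h|h
    · rw [h]; norm_num
    · have hpos : 0 < ‖y-x‖ := norm_pos_iff.mpr h
      rw [show (-2:ℝ) = -(2:ℝ) by norm_num, Real.rpow_neg (norm_nonneg _),
        show (2:ℝ) = ((2:ℕ):ℝ) by norm_num, Real.rpow_natCast]
  have hmeas : AEStronglyMeasurable
      (fun y : EuclideanSpace ℝ (Fin d) => heatKernel d s y * ‖y - x‖ ^ (-2:ℝ)) volume := by
    rw [hrw]
    apply Measurable.aestronglyMeasurable
    exact (hk_continuous hs).measurable.mul
      (((measurable_id.sub_const x).norm.pow_const 2).inv)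
  rw [integral_eq_lintegral_of_nonneg_ae (Eventually.of_forall hnn) hmeas]
  have hb1 := rlint_bound1 hd ha hs
  have hb2 := rlint_bound2 hd ‖x‖ hs
  rw [← lint_eq x hd hs] at hb1 hb2
  refine ENNReal.toReal_le_of_le_ofReal (le_min (by positivity) (by positivity)) ?_
  rcases le_total (2*(d:ℝ)/(((d:ℝ)-2)*‖x‖^2)) (1/(((d:ℝ)-2)*s)) with h | h
  · rw [min_eq_left h]; exact hb1
  · rw [min_eq_right h]; exact hb2
end innerle

lemma int_one_div_Ioc {c T D : ℝ} (hc : 0 < c) (hcT : c ≤ T) (hD : 0 < D) :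
    IntegrableOn (fun s => 1/(D*s)) (Ioc c T) ∧
    ∫ s in Ioc c T, 1/(D*s) = (1/D) * Real.log (T/c) := by
  have hcont : ContinuousOn (fun s : ℝ => 1/(D*s)) (Icc c T) := by
    apply ContinuousOn.div continuousOn_const (continuousOn_const.mul continuousOn_id)
    intro s hs
    have : 0 < s := lt_of_lt_of_le hc hs.1
    exact mul_ne_zero hD.ne' this.ne'
  constructor
  · exact (hcont.integrableOn_Icc).mono_set Ioc_subset_Icc_self
  · rw [← intervalIntegral.integral_of_le hcT]
    have hrw : (fun s : ℝ => 1/(D*s)) = fun s => (1/D) * (1/s) := by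
      funext s; rw [one_div, mul_inv, one_div, one_div]
    rw [hrw, intervalIntegral.integral_const_mul, integral_one_div]
    intro h
    rcases (mem_uIcc.1 h) with ⟨h1, _⟩ | ⟨_, h2⟩
    · linarith
    · linarith

lemma int_rsqrt_Ioc {c t : ℝ} (hc : 0 < c) (hct : c ≤ t) :
    IntegrableOn (fun s => (Real.sqrt s)⁻¹) (Ioc c t) ∧
    ∫ s in Ioc c t, (Real.sqrt s)⁻¹ = 2*(Real.sqrt t - Real.sqrt c) := by
  have hcont : ContinuousOn (fun s : ℝ => (Real.sqrt s)⁻¹) (Icc c t) := by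
    apply ContinuousOn.inv₀ (Real.continuous_sqrt.continuousOn)
    intro s hs
    have h0 : 0 < s := lt_of_lt_of_le hc hs.1
    exact (Real.sqrt_pos.2 h0).ne'
  constructor
  · exact (hcont.integrableOn_Icc).mono_set Ioc_subset_Icc_self
  · rw [← intervalIntegral.integral_of_le hct]
    have hEq : Set.EqOn (fun s : ℝ => (Real.sqrt s)⁻¹) (fun s => s ^ (-(1/2) : ℝ)) (uIcc c t) := by
      intro s hs
      have h0 : 0 < s := by
        rcases mem_uIcc.1 hs with ⟨h1, _⟩ | ⟨h1, _⟩ <;> linarith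
      simp only
      rw [Real.rpow_neg h0.le, Real.sqrt_eq_rpow]
    rw [intervalIntegral.integral_congr hEq, integral_rpow (Or.inl (by norm_num))]
    have h1 : (-(1/2) : ℝ) + 1 = 1/2 := by norm_num
    rw [h1, ← Real.sqrt_eq_rpow, ← Real.sqrt_eq_rpow]
    ring


set_option maxHeartbeats 1000000 in
theorem time_integral_inverse_square_bound (d : ℕ) (hd : 3 ≤ d)
    (x : EuclideanSpace ℝ (Fin d)) (hx : x ≠ 0) (t : ℝ) (ht : 0 ≤ t) :
    (∫ s in Set.Ioc (0 : ℝ) t, ∫ y, heatKernel d s y * ‖y - x‖ ^ (-2 : ℝ)) ≤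
      2 / ((d : ℝ) - 2) * (max (Real.log (1 / ‖x‖)) 0 + 1 + Real.sqrt d * Real.sqrt t) := by
  classical
  have h3d : (3:ℝ) ≤ (d:ℝ) := by exact_mod_cast hd
  have hd2 : (0:ℝ) < (d:ℝ) - 2 := by linarith
  have hd0 : (0:ℝ) < (d:ℝ) := by linarith
  have ha : 0 < ‖x‖ := norm_pos_iff.mpr hx
  set B : ℝ := 1/((d:ℝ)-2) with hB
  have hBpos : 0 < B := by positivity
  set A : ℝ := 2*(d:ℝ)/(((d:ℝ)-2)*‖x‖^2) with hA
  have hApos : 0 < A := by positivity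
  set L : ℝ := max (Real.log (1/‖x‖)) 0 with hL
  have hL0 : 0 ≤ L := le_max_right _ _
  have hlogle : Real.log (1/‖x‖) ≤ L := le_max_left _ _
  set g : ℝ → ℝ := fun s =>
    min A (if s ≤ 1/(d:ℝ) then 1/(((d:ℝ)-2)*s) else Real.sqrt d * B * (Real.sqrt s)⁻¹) with hgdef
  have hgnn : ∀ s : ℝ, 0 < s → 0 ≤ g s := by
    intro s hs
    refine le_min hApos.le ?_
    split_ifs with h
    · positivity
    · positivity
  -- pointwise domination
  have hInner_g : ∀ s ∈ Ioc (0:ℝ) t, (∫ y, heatKernel d s y * ‖y - x‖ ^ (-2:ℝ)) ≤ g s := by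
    intro s hs
    have h := inner_le hd x hx hs.1
    by_cases hcase : s ≤ 1/(d:ℝ)
    · rw [hgdef]; simp only [if_pos hcase]
      exact h
    · push_neg at hcase
      have hspos : 0 < s := hs.1
      have hsq : Real.sqrt s * Real.sqrt s = s := Real.mul_self_sqrt hspos.le
      have hsqpos : 0 < Real.sqrt s := Real.sqrt_pos.2 hspos
      have h2 : 1 ≤ Real.sqrt d * Real.sqrt s := by
        rw [← Real.sqrt_mul hd0.le s, show (1:ℝ) = Real.sqrt 1 by simp]
        apply Real.sqrt_le_sqrt
        rw [div_lt_iff₀ hd0] at hcase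
        nlinarith
      have h1 : 1/(((d:ℝ)-2)*s) ≤ Real.sqrt d * B * (Real.sqrt s)⁻¹ := by
        rw [div_le_iff₀ (by positivity)]
        have hinv : (Real.sqrt s)⁻¹ * s = Real.sqrt s := by
          rw [inv_mul_eq_div, div_eq_iff hsqpos.ne']
          exact hsq.symm
        have h3 : Real.sqrt d * B * (Real.sqrt s)⁻¹ * (((d:ℝ)-2)*s)
            = (Real.sqrt d * Real.sqrt s) * (B * ((d:ℝ)-2)) := by
          calc Real.sqrt d * B * (Real.sqrt s)⁻¹ * (((d:ℝ)-2)*s)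
              = Real.sqrt d * ((Real.sqrt s)⁻¹ * s) * (B * ((d:ℝ)-2)) := by ring
            _ = (Real.sqrt d * Real.sqrt s) * (B * ((d:ℝ)-2)) := by rw [hinv]
        have hBD : B*((d:ℝ)-2) = 1 := by rw [hB]; field_simp
        rw [h3, hBD, mul_one]
        exact h2
      rw [hgdef]; simp only [if_neg (not_le.mpr hcase)]
      exact h.trans (min_le_min le_rfl h1)
  -- integrability of g
  have hg_meas : Measurable g := by
    apply Measurable.min measurable_const
    apply Measurable.ite (measurableSet_le measurable_id measurable_const)
    · exact measurable_const.div (measurable_const.mul measurable_id)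
    · exact (Real.continuous_sqrt.measurable.inv).const_mul _
  have hg_int : IntegrableOn g (Ioc 0 t) := by
    refine Integrable.mono'
      (show IntegrableOn (fun _ => A) (Ioc 0 t) volume from
        integrableOn_const measure_Ioc_lt_top.ne)
      hg_meas.aestronglyMeasurable
      (((ae_restrict_iff' measurableSet_Ioc).2 (Eventually.of_forall fun s hs => ?_)))
    rw [Real.norm_eq_abs, abs_of_nonneg (hgnn s hs.1)]
    exact min_le_left _ _
  -- main comparison
  have hmain : (∫ s in Set.Ioc (0 : ℝ) t, ∫ y, heatKernel d s y * ‖y - x‖ ^ (-2 : ℝ))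
      ≤ ∫ s in Ioc (0:ℝ) t, g s := by
    refine integral_mono_of_nonneg ?_ hg_int ?_
    · refine (ae_restrict_iff' measurableSet_Ioc).2 (Eventually.of_forall fun s hs => ?_)
      exact integral_nonneg fun y =>
        mul_nonneg (hk_nonneg hs.1 y) (Real.rpow_nonneg (norm_nonneg _) _)
    · exact (ae_restrict_iff' measurableSet_Ioc).2 (Eventually.of_forall hInner_g)
  -- Part I : ∫_{Ioc 0 T'} g ≤ 2B(L+1) for 0 < T' ≤ min (1/d) -, T' ≤ t
  have partI : ∀ T' : ℝ, 0 < T' → T' ≤ 1/(d:ℝ) → T' ≤ t →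
      ∫ s in Ioc (0:ℝ) T', g s ≤ 2*B*(L+1) := by
    intro T' hT0 hTd hTt
    set sstar : ℝ := ‖x‖^2/(2*(d:ℝ)) with hsstar
    have hstarpos : 0 < sstar := by positivity
    set m : ℝ := min T' sstar with hm
    have hm0 : 0 < m := lt_min hT0 hstarpos
    have hmT : m ≤ T' := min_le_left _ _
    have hint1 : IntegrableOn g (Ioc 0 m) :=
      hg_int.mono_set (Ioc_subset_Ioc le_rfl (hmT.trans hTt))
    have hint2 : IntegrableOn g (Ioc m T') :=
      hg_int.mono_set (Ioc_subset_Ioc hm0.le hTt)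
    have hsplit : ∫ s in Ioc (0:ℝ) T', g s
        = (∫ s in Ioc (0:ℝ) m, g s) + ∫ s in Ioc m T', g s := by
      rw [← Ioc_union_Ioc_eq_Ioc hm0.le hmT,
        setIntegral_union (Ioc_disjoint_Ioc_of_le le_rfl) measurableSet_Ioc hint1 hint2]
    have hb1 : (∫ s in Ioc (0:ℝ) m, g s) ≤ A * m := by
      have := setIntegral_mono_on hint1 (integrableOn_const measure_Ioc_lt_top.ne)
        measurableSet_Ioc (fun s _ => min_le_left _ _ : ∀ s ∈ Ioc (0:ℝ) m, g s ≤ A)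
      rw [setIntegral_const, Real.volume_real_Ioc_of_le hm0.le, sub_zero,
        smul_eq_mul, mul_comm] at this
      exact this
    have hb2 : (∫ s in Ioc m T', g s) ≤ B * Real.log (T'/m) := by
      have hmono : ∀ s ∈ Ioc m T', g s ≤ 1/(((d:ℝ)-2)*s) := by
        intro s hs
        have : s ≤ 1/(d:ℝ) := hs.2.trans hTd
        rw [hgdef]; simp only [if_pos this]
        exact min_le_right _ _
      have := setIntegral_mono_on hint2 (int_one_div_Ioc hm0 hmT hd2).1
        measurableSet_Ioc hmono
      rw [(int_one_div_Ioc hm0 hmT hd2).2] at this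
      rw [hB]
      exact this
    rw [hsplit]
    -- arithmetic
    have hAstar : A * sstar = B := by
      rw [hA, hB, hsstar]
      field_simp
    rcases le_total T' sstar with hc1 | hc1
    · have hmeq : m = T' := min_eq_left hc1
      have hlog0 : Real.log (T'/m) = 0 := by rw [hmeq, div_self hT0.ne', Real.log_one]
      have hAmB : A * m ≤ B := by
        rw [hmeq]
        calc A * T' ≤ A * sstar := by nlinarith
          _ = B := hAstar
      nlinarith [mul_nonneg hBpos.le hL0, hb2, hlog0, hb1]
    · have hmeq : m = sstar := min_eq_right hc1
      have hlog : Real.log (T'/m) ≤ Real.log (2/‖x‖^2) := by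
        apply Real.log_le_log (by positivity)
        rw [hmeq, hsstar]
        rw [div_le_div_iff₀ (by positivity) (by positivity)]
        calc T' * ‖x‖^2 ≤ (1/(d:ℝ)) * ‖x‖^2 := by nlinarith
          _ = 2 * (‖x‖^2/(2*(d:ℝ))) := by
              field_simp
      have hlog2 : Real.log (2/‖x‖^2) = Real.log 2 + 2 * Real.log (1/‖x‖) := by
        rw [Real.log_div two_ne_zero (by positivity), Real.log_pow]
        have : Real.log (1/‖x‖) = -Real.log ‖x‖ := by rw [one_div, Real.log_inv]
        rw [this]
        push_cast
        ring
      have hlog2le : Real.log 2 ≤ 1 := by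
        have := Real.log_le_sub_one_of_pos (by norm_num : (0:ℝ) < 2)
        linarith
      have hAm : A * m = B := by rw [hmeq]; exact hAstar
      have : B * Real.log (T'/m) ≤ B * (1 + 2*L) := by
        apply mul_le_mul_of_nonneg_left _ hBpos.le
        calc Real.log (T'/m) ≤ Real.log (2/‖x‖^2) := hlog
          _ = Real.log 2 + 2*Real.log (1/‖x‖) := hlog2
          _ ≤ 1 + 2*L := by nlinarith
      nlinarith [hb1, hb2, this, hAm, mul_nonneg hBpos.le hL0]
  -- Part II
  have partII : 1/(d:ℝ) < t → ∫ s in Ioc (1/(d:ℝ)) t, g s ≤ 2*B*(Real.sqrt d * Real.sqrt t) := by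
    intro h1d
    have h1d0 : (0:ℝ) < 1/(d:ℝ) := by positivity
    have hint := int_rsqrt_Ioc h1d0 h1d.le
    have hintc : IntegrableOn (fun s => Real.sqrt d * B * (Real.sqrt s)⁻¹) (Ioc (1/(d:ℝ)) t) :=
      hint.1.const_mul _
    have hmono : ∀ s ∈ Ioc (1/(d:ℝ)) t, g s ≤ Real.sqrt d * B * (Real.sqrt s)⁻¹ := by
      intro s hs
      have : ¬ (s ≤ 1/(d:ℝ)) := not_le.mpr hs.1
      rw [hgdef]; simp only [if_neg this]
      exact min_le_right _ _
    have hg_int2 : IntegrableOn g (Ioc (1/(d:ℝ)) t) :=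
      hg_int.mono_set (Ioc_subset_Ioc h1d0.le le_rfl)
    have := setIntegral_mono_on hg_int2 hintc measurableSet_Ioc hmono
    have heval : (∫ s in Ioc (1/(d:ℝ)) t, Real.sqrt d * B * (Real.sqrt s)⁻¹)
        = Real.sqrt d * B * (2*(Real.sqrt t - Real.sqrt (1/(d:ℝ)))) := by
      rw [integral_const_mul, hint.2]
    rw [heval] at this
    refine this.trans ?_
    have h1 : 0 ≤ Real.sqrt (1/(d:ℝ)) := Real.sqrt_nonneg _
    have h2 : 0 ≤ Real.sqrt d := Real.sqrt_nonneg _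
    nlinarith [mul_nonneg (mul_nonneg h2 hBpos.le) h1]
  -- assemble
  have hRHS : 2/((d:ℝ)-2) * (L + 1 + Real.sqrt d * Real.sqrt t)
      = 2*B*(L+1) + 2*B*(Real.sqrt d * Real.sqrt t) := by
    rw [hB]; ring
  rw [hRHS]
  have hsqnn : 0 ≤ 2*B*(Real.sqrt d * Real.sqrt t) := by positivity
  rcases eq_or_lt_of_le ht with h0 | h0
  · rw [← h0]
    simp only [Ioc_self, Measure.restrict_empty, integral_zero_measure, Real.sqrt_zero,
      mul_zero, add_zero]
    nlinarith [mul_nonneg (by linarith : (0:ℝ) ≤ 2*B) (by linarith : (0:ℝ) ≤ L+1)]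
  rcases le_or_gt t (1/(d:ℝ)) with hc | hc
  · have := hmain.trans (partI t h0 hc le_rfl)
    linarith
  · have hsplit2 : ∫ s in Ioc (0:ℝ) t, g s
        = (∫ s in Ioc (0:ℝ) (1/(d:ℝ)), g s) + ∫ s in Ioc (1/(d:ℝ)) t, g s := by
      have h1d0 : (0:ℝ) < 1/(d:ℝ) := by positivity
      rw [← Ioc_union_Ioc_eq_Ioc h1d0.le hc.le,
        setIntegral_union (Ioc_disjoint_Ioc_of_le le_rfl) measurableSet_Ioc
          (hg_int.mono_set (Ioc_subset_Ioc le_rfl hc.le))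
          (hg_int.mono_set (Ioc_subset_Ioc h1d0.le le_rfl))]
    have hI := partI (1/(d:ℝ)) (by positivity) le_rfl hc.le
    have hII := partII hc
    rw [hsplit2] at hmain
    linarith
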